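/- Let N ≥ 1 and let P be the birth-and-death stochastic matrix on {0,1,…,N} with parameters p_x, q_x, r_x (p_x + q_x + r_x = 1, tridiagonal, q_0 = 0 = p_N) such that p_0 = 0, q_N = 0, p_x > 0 and q_x > 0 for 1 ≤ x ≤ N−1, and the monotonicity condition p_x + q_{x+1} ≤ 1 holds for all x < N. Let Q be the matrix on {0,1,…,N−1} defined by Q(x,x−1) = p_x, Q(x,x) = 1 − p_x − q_{x+1}, Q(x,x+1) = q_{x+1} (indices within {0,…,N−1}; note q_N = 0 so Q(N−1,N−1) = 1 − p_{N−1}), and all other entries 0; Q is a stochastic matrix. Let ρ be a stationary distribution of Q, i.e. ρ has nonnegative entries summing to 1 with ρ·Q = ρ as a row vector. Define the scale function η(x) := Σ_{y=0}^{x−1} Π_{z=1}^{y} (q_z/p_z) for 0 ≤ x ≤ N (so η(0) = 0). Then for every x ∈ {0,1,…,N}: η(x) = η(N)·Σ_{z=0}^{x−1} ρ(z). Equivalently, η(x)/η(N) equals the cumulative mass of ρ strictly below x, and 1 − η(x)/η(N) = Σ_{z≥x} ρ(z). -/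

import Mathlib

open Matrix Finset

/-- Proposition propo4 (matrix form): for a monotone birth-and-death kernel on
`{0,…,N}` with absorbing endpoints (`p₀ = 0`, `q_N = 0`), the scale function `η`
satisfies `η(x) = η(N)·Σ_{z<x} ρ(z)` and `1 − η(x)/η(N) = Σ_{z≥x} ρ(z)`, where `ρ` is
a stationary distribution of the Siegmund dual `Q` restricted to `{0,…,N−1}`. -/
theorem stmt12 (N : ℕ) (hN : 1 ≤ N) (P : Matrix (Fin (N+1)) (Fin (N+1)) ℝ)
    (p q r : Fin (N+1) → ℝ) (ρ : Fin N → ℝ)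
    (hP0 : ∀ x y, 0 ≤ P x y) (hP1 : ∀ x, ∑ y, P x y = 1)
    (htri : ∀ x y : Fin (N+1), ((x : ℕ) + 1 < (y : ℕ) ∨ (y : ℕ) + 1 < (x : ℕ)) → P x y = 0)
    (hup : ∀ x : Fin (N+1), (x : ℕ) < N → P x (x + 1) = p x)
    (hdown : ∀ x : Fin (N+1), 0 < (x : ℕ) → P x (x - 1) = q x)
    (hdiag : ∀ x, P x x = r x)
    (hsum : ∀ x, p x + q x + r x = 1)
    (hq0 : q 0 = 0) (hpN : p (Fin.last N) = 0)
    (hp0 : p 0 = 0) (hqN : q (Fin.last N) = 0)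
    (hppos : ∀ x : Fin (N+1), 0 < (x : ℕ) → (x : ℕ) < N → 0 < p x)
    (hqpos : ∀ x : Fin (N+1), 0 < (x : ℕ) → (x : ℕ) < N → 0 < q x)
    (hmono : ∀ x : Fin (N+1), (x : ℕ) < N → p x + q (x + 1) ≤ 1)
    (hρ0 : ∀ z, 0 ≤ ρ z) (hρ1 : ∑ z, ρ z = 1)
    (hρQ : ∀ y : Fin N, ∑ x : Fin N,
      ρ x * (Matrix.of fun x y : Fin N =>
        if (y : ℕ) + 1 = (x : ℕ) then p x.castSucc
        else if y = x then 1 - p x.castSucc - q x.succ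
        else if (y : ℕ) = (x : ℕ) + 1 then q x.succ
        else 0) x y = ρ y) :
    let η : ℕ → ℝ := fun x => ∑ y ∈ Finset.range x,
      ∏ z ∈ Finset.Icc 1 y, q (Fin.ofNat (N+1) (z : ℕ)) / p (Fin.ofNat (N+1) (z : ℕ))
    ∀ x : ℕ, x ≤ N →
      η x = η N * ∑ z ∈ Finset.univ.filter (fun z : Fin N => (z : ℕ) < x), ρ z ∧
      1 - η x / η N = ∑ z ∈ Finset.univ.filter (fun z : Fin N => x ≤ (z : ℕ)), ρ z := by
  intro η x hx
  classical
  set pp : ℕ → ℝ := fun i => p (Fin.ofNat (N+1) (i : ℕ)) with hpp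
  set qq : ℕ → ℝ := fun i => q (Fin.ofNat (N+1) (i : ℕ)) with hqq
  set pi : ℕ → ℝ := fun y => ∏ z ∈ Finset.Icc 1 y, qq z / pp z with hpi
  set R : ℕ → ℝ := fun i => if h : i < N then ρ ⟨i, h⟩ else 0 with hR
  have hη : ∀ m : ℕ, η m = ∑ y ∈ Finset.range m, pi y := fun m => rfl
  have hval : ∀ i : ℕ, i ≤ N → ((Fin.ofNat (N+1) (i : ℕ) : Fin (N+1)) : ℕ) = i :=
    fun i hi => Nat.mod_eq_of_lt (by omega)
  have hppos' : ∀ i : ℕ, 0 < i → i < N → 0 < pp i := by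
    intro i h1 h2
    exact hppos _ (by rw [hval i h2.le]; exact h1) (by rw [hval i h2.le]; exact h2)
  have hqq0 : qq 0 = 0 := by simpa [hqq] using hq0
  have hpp0 : pp 0 = 0 := by simpa [hpp] using hp0
  have hRout : ∀ i : ℕ, ¬ i < N → R i = 0 := by
    intro i hi; simp [hR, hi]
  have hRρ : ∀ z : Fin N, R (z : ℕ) = ρ z := by
    intro z; simp [hR, z.isLt]
  -- stationary equation in ℕ form
  have key : ∀ y : ℕ, y < N →
      R (y+1) * pp (y+1) + R y * (1 - pp y - qq (y+1)) + R (y-1) * qq y = R y := by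
    intro y hy
    have h := hρQ ⟨y, hy⟩
    have h' : ∑ x : Fin N, (fun i : ℕ =>
        (if y + 1 = i then R i * pp i else 0)
        + (if i = y then R i * (1 - pp i - qq (i+1)) else 0)
        + (if y = i + 1 then R i * qq (i+1) else 0)) (x : ℕ) = ρ ⟨y, hy⟩ := by
      rw [← h]
      apply Finset.sum_congr rfl
      intro x _
      simp only [Matrix.of_apply]
      have e1 : p x.castSucc = pp (x : ℕ) := by
        rw [hpp]; congr 1; apply Fin.ext
        rw [Fin.coe_castSucc, hval _ (by omega)]
      have e2 : q x.succ = qq ((x : ℕ) + 1) := by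
        rw [hqq]; congr 1; apply Fin.ext
        rw [Fin.val_succ, hval _ (by omega)]
      rw [e1, e2, ← hRρ x]
      simp only [Fin.ext_iff, Fin.val_mk]
      split_ifs <;> first | ring1 | (exfalso; omega)
    rw [Fin.sum_univ_eq_sum_range (fun i : ℕ =>
        (if y + 1 = i then R i * pp i else 0)
        + (if i = y then R i * (1 - pp i - qq (i+1)) else 0)
        + (if y = i + 1 then R i * qq (i+1) else 0)) N] at h'
    simp only [Finset.sum_add_distrib] at h'
    rw [Finset.sum_ite_eq (Finset.range N) (y+1) (fun i => R i * pp i),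
      Finset.sum_ite_eq' (Finset.range N) y
        (fun i => R i * (1 - pp i - qq (i+1)))] at h'
    have hA : (if y + 1 ∈ Finset.range N then R (y+1) * pp (y+1) else 0)
        = R (y+1) * pp (y+1) := by
      by_cases hc : y + 1 ∈ Finset.range N
      · rw [if_pos hc]
      · rw [if_neg hc, hRout (y+1) (by simpa using hc)]; ring
    have hB : (if y ∈ Finset.range N then R y * (1 - pp y - qq (y+1)) else 0)
        = R y * (1 - pp y - qq (y+1)) := by
      rw [if_pos (Finset.mem_range.mpr hy)]
    rw [hA, hB] at h'
    have hC : (∑ i ∈ Finset.range N, if y = i + 1 then R i * qq (i+1) else 0)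
        = R (y-1) * qq y := by
      rcases y with _ | k
      · rw [Finset.sum_eq_zero (by intro i _; rw [if_neg (by omega)])]
        rw [hqq0]; ring
      · have : ∀ i ∈ Finset.range N,
            (if k + 1 = i + 1 then R i * qq (i+1) else 0)
            = (if k = i then R i * qq (i+1) else 0) := by
          intro i _; by_cases hk : k = i
          · rw [if_pos (by omega), if_pos hk]
          · rw [if_neg (by omega), if_neg hk]
        rw [Finset.sum_congr rfl this,
          Finset.sum_ite_eq (Finset.range N) k (fun i => R i * qq (i+1)),
          if_pos (Finset.mem_range.mpr (by omega))]
        simp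
    rw [hC] at h'
    rw [h', hRρ ⟨y, hy⟩]
  -- detailed balance
  have db : ∀ y : ℕ, R (y+1) * pp (y+1) = R y * qq (y+1) := by
    intro y
    induction y with
    | zero =>
      have k := key 0 hN
      simp only [Nat.zero_sub] at k
      linear_combination k + R 0 * hpp0 - R 0 * hqq0
    | succ k ih =>
      by_cases hk : k + 1 < N
      · have K := key (k+1) hk
        simp only [Nat.add_sub_cancel] at K
        linear_combination K + ih
      · rw [hRout (k+2) (by omega), hRout (k+1) (by omega)]; ring
  -- formula R i = R 0 * pi i
  have form : ∀ i : ℕ, i < N → R i = R 0 * pi i := by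
    intro i
    induction i with
    | zero => intro _; simp [hpi]
    | succ k ih =>
      intro h
      have hppk : 0 < pp (k+1) := hppos' (k+1) (by omega) h
      have d := db k
      have hpis : pi (k+1) = pi k * (qq (k+1) / pp (k+1)) := by
        simp only [hpi]
        exact Finset.prod_Icc_succ_top (a := 1) (b := k)
          (f := fun z => qq z / pp z) (by omega)
      have hRk : R (k+1) = R k * qq (k+1) / pp (k+1) := by
        rw [eq_div_iff hppk.ne']; exact d
      rw [hRk, ih (by omega), hpis]
      field_simp
  -- sum conversion
  have hsumlt : ∀ m : ℕ, m ≤ N →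
      ∑ z ∈ Finset.univ.filter (fun z : Fin N => (z : ℕ) < m), ρ z
      = ∑ i ∈ Finset.range m, R i := by
    intro m hm
    rw [Finset.sum_filter]
    have : ∀ z : Fin N, (if (z : ℕ) < m then ρ z else 0)
        = (fun i : ℕ => if i < m then R i else 0) (z : ℕ) := by
      intro z; simp only [hRρ z]
    rw [Finset.sum_congr rfl (fun z _ => this z),
      Fin.sum_univ_eq_sum_range (fun i : ℕ => if i < m then R i else 0) N]
    rw [← Finset.sum_filter]
    congr 1
    ext i
    simp only [Finset.mem_filter, Finset.mem_range]
    omega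
  have hRsum : ∀ m : ℕ, m ≤ N → ∑ i ∈ Finset.range m, R i = R 0 * η m := by
    intro m hm
    rw [hη, Finset.mul_sum]
    apply Finset.sum_congr rfl
    intro i hi
    exact form i (by have := Finset.mem_range.mp hi; omega)
  have hone : R 0 * η N = 1 := by
    rw [← hRsum N le_rfl, ← hsumlt N le_rfl]
    rw [← hρ1]
    congr 1
    apply Finset.filter_true_of_mem
    intro z _
    exact z.isLt
  have hηN : η N ≠ 0 := by
    intro h0; rw [h0, mul_zero] at hone; norm_num at hone
  have part1 : η x = η N * ∑ z ∈ Finset.univ.filter (fun z : Fin N => (z : ℕ) < x), ρ z := by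
    rw [hsumlt x hx, hRsum x hx]
    linear_combination (-(η x)) * hone
  refine ⟨part1, ?_⟩
  have hsplit : (∑ z ∈ Finset.univ.filter (fun z : Fin N => (z : ℕ) < x), ρ z)
      + (∑ z ∈ Finset.univ.filter (fun z : Fin N => x ≤ (z : ℕ)), ρ z) = 1 := by
    rw [← hρ1]
    have : (Finset.univ.filter (fun z : Fin N => x ≤ (z : ℕ)))
        = Finset.univ.filter (fun z : Fin N => ¬ (z : ℕ) < x) := by
      apply Finset.filter_congr; intro z _; simp [not_lt]
    rw [this]
    exact Finset.sum_filter_add_sum_filter_not _ _ _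
  have hdiv : η x / η N = ∑ z ∈ Finset.univ.filter (fun z : Fin N => (z : ℕ) < x), ρ z := by
    rw [part1, mul_div_assoc]
    rw [mul_comm, div_mul_cancel₀ _ hηN]
    -- fallback
  rw [hdiv]
  linarith [hsplit]
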